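/- Under the Tree-to-Path construction, if the root r has label l(r) = 1, the output is a directed Hamiltonian path P with Beg(P) = max(C(r)) and End(P) = r. -/
import Mathlib


variable {V : Type*}

/-- Children of `v` under parent map `p` with root `r`. -/
def t2pChild [Fintype V] [LinearOrder V] (r : V) (p : V → V) (v : V) : Finset V :=
  Finset.univ.filter (fun u => u ≠ r ∧ p u = v)

/-- Siblings of `v` greater than `v`. -/
def t2pRSib [Fintype V] [LinearOrder V] (r : V) (p : V → V) (v : V) : Finset V :=
  (t2pChild r p (p v)).filter (fun w => v < w)

/-- Siblings of `v` smaller than `v`. -/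
def t2pLSib [Fintype V] [LinearOrder V] (r : V) (p : V → V) (v : V) : Finset V :=
  (t2pChild r p (p v)).filter (fun w => w < v)

/-- The directed edge added by the Tree-to-Path algorithm for a non-root vertex `v`,
where `l` is the label function (only its parity matters). -/
def t2pEdge [Fintype V] [LinearOrder V] (r : V) (p : V → V) (l : V → ℕ) (v : V) : V × V :=
  if l v % 2 = 1 then
    (if h : (t2pRSib r p v).Nonempty then (t2pRSib r p v).min' h else p v,
     if h : (t2pChild r p v).Nonempty then (t2pChild r p v).max' h else v)
  else
    (if h : (t2pChild r p v).Nonempty then (t2pChild r p v).min' h else v,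
     if h : (t2pLSib r p v).Nonempty then (t2pLSib r p v).max' h else p v)

set_option linter.unusedSectionVars false

namespace T2Paux

/-- element type for keys -/
abbrev E (V : Type*) := WithBot (WithTop Vᵒᵈ)

variable [LinearOrder V]

def emb (c : V) : E V := (((OrderDual.toDual c : Vᵒᵈ) : WithTop Vᵒᵈ) : E V)

lemma emb_lt_emb {c c' : V} : emb c < emb c' ↔ c' < c := by
  rw [emb, emb, WithBot.coe_lt_coe, WithTop.coe_lt_coe]
  rfl

lemma emb_inj {c c' : V} (h : emb c = emb c') : c = c' := by
  rw [emb, emb] at h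
  exact congrArg OrderDual.ofDual (WithTop.coe_injective (WithBot.coe_injective h))

lemma bot_lt_emb (c : V) : (⊥ : E V) < emb c := WithBot.bot_lt_coe _

lemma emb_lt_top (c : V) : emb c < (⊤ : E V) := by
  rw [emb, show (⊤ : E V) = ((⊤ : WithTop Vᵒᵈ) : E V) from rfl, WithBot.coe_lt_coe]
  exact WithTop.coe_lt_top _

-- lex helper on List (E V)
lemma lex_mid {s t₁ t₂ : List (E V)} {e₁ e₂ : E V} (h : e₁ < e₂) :
    s ++ e₁ :: t₁ < s ++ e₂ :: t₂ :=
  List.Lex.append_left _ (List.Lex.rel h) s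

def chainAux (r : V) (p : V → V) : ℕ → V → List V
  | 0, _ => []
  | k+1, v => if v = r then [] else chainAux r p k (p v) ++ [v]

/-- the ancestor chain of v (from top, excluding r, ending with v) -/
def ch (r : V) (p : V → V) (d : V → ℕ) (v : V) : List V := chainAux r p (d v) v

variable {r : V} {p : V → V} {d : V → ℕ}

lemma chainAux_root : ∀ k, chainAux r p k r = [] := by
  intro k
  cases k with
  | zero => rfl
  | succ k => simp [chainAux]

lemma chain_stable (hd : ∀ v, v ≠ r → d v = d (p v) + 1) :
    ∀ k v, d v ≤ k → chainAux r p k v = chainAux r p (d v) v := by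
  intro k
  induction k with
  | zero => intro v hv; rw [Nat.le_zero.mp hv]
  | succ k ih =>
    intro v hv
    by_cases hvr : v = r
    · rw [hvr, chainAux_root, chainAux_root]
    · have hdv := hd v hvr
      conv_rhs => rw [hdv]
      simp only [chainAux, if_neg hvr]
      rw [ih (p v) (by omega)]

lemma ch_step (hd : ∀ v, v ≠ r → d v = d (p v) + 1) {v : V} (hv : v ≠ r) :
    ch r p d v = ch r p d (p v) ++ [v] := by
  unfold ch
  conv_lhs => rw [hd v hv]
  simp only [chainAux, if_neg hv]

lemma ch_root (hdr : d r = 0) : ch r p d r = [] := by unfold ch; rw [hdr]; rfl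

lemma ch_length (hdr : d r = 0) (hd : ∀ v, v ≠ r → d v = d (p v) + 1) :
    ∀ v, (ch r p d v).length = d v := by
  have H : ∀ n v, d v = n → (ch r p d v).length = d v := by
    intro n
    induction n using Nat.strong_induction_on with
    | _ n ih =>
      intro v hn
      by_cases hvr : v = r
      · subst hvr; rw [ch_root hdr, hdr]; rfl
      · rw [ch_step hd hvr]
        have hdv := hd v hvr
        rw [List.length_append, ih (d (p v)) (by omega) (p v) rfl]
        simp [hdv]
  exact fun v => H (d v) v rfl

lemma ch_eq_nil_iff (hdr : d r = 0) (hd : ∀ v, v ≠ r → d v = d (p v) + 1) {v : V} :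
    ch r p d v = [] ↔ v = r := by
  constructor
  · intro h
    by_contra hvr
    rw [ch_step hd hvr] at h
    simp at h
  · rintro rfl; exact ch_root hdr

lemma ch_inj (hdr : d r = 0) (hd : ∀ v, v ≠ r → d v = d (p v) + 1) {u w : V}
    (h : ch r p d u = ch r p d w) : u = w := by
  by_cases hu : u = r
  · subst hu
    rw [ch_root hdr] at h
    exact ((ch_eq_nil_iff hdr hd).mp h.symm).symm
  · by_cases hw : w = r
    · subst hw
      rw [ch_root hdr] at h
      exact absurd ((ch_eq_nil_iff hdr hd).mp h) hu
    · rw [ch_step hd hu, ch_step hd hw] at h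
      have := congrArg List.getLast? h
      simpa using this

lemma sub_step (hdr : d r = 0) (hd : ∀ v, v ≠ r → d v = d (p v) + 1) {x c : V}
    (h : ch r p d x <+: ch r p d c) (hne : c ≠ x) :
    ∃ u, u ≠ r ∧ p u = x ∧ ch r p d x ++ [u] <+: ch r p d c := by
  have H : ∀ n c, d c = n → ch r p d x <+: ch r p d c → c ≠ x →
      ∃ u, u ≠ r ∧ p u = x ∧ ch r p d x ++ [u] <+: ch r p d c := by
    intro n
    induction n using Nat.strong_induction_on with
    | _ n ih =>
      intro c hn h hne
      by_cases hcr : c = r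
      · subst hcr
        rw [ch_root hdr] at h
        have := List.prefix_nil.mp h
        exact absurd (ch_inj hdr hd (this.trans (ch_root hdr).symm)) (Ne.symm hne)
      · rw [ch_step hd hcr] at h
        rcases List.prefix_concat_iff.mp h with h' | h'
        · rw [← ch_step hd hcr] at h'
          exact absurd (ch_inj hdr hd h') (Ne.symm hne)
        · by_cases hx : ch r p d x = ch r p d (p c)
          · refine ⟨c, hcr, ch_inj hdr hd hx.symm ▸ rfl, ?_⟩
            · rw [ch_step hd hcr, hx]
          · have hdc := hd c hcr
            obtain ⟨u, hur, hpu, hpre⟩ := ih (d (p c)) (by omega) (p c) rfl h'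
              (fun hh => hx (by rw [hh]))
            exact ⟨u, hur, hpu, hpre.trans (by rw [ch_step hd hcr]; exact ⟨[c], rfl⟩)⟩
  exact H (d c) c rfl h hne

/-- divergence trichotomy for lists -/
lemma list_trich {α : Type*} : ∀ (l₁ l₂ : List α), l₁ <+: l₂ ∨ l₂ <+: l₁ ∨
    ∃ s e₁ e₂ t₁ t₂, e₁ ≠ e₂ ∧ l₁ = s ++ e₁ :: t₁ ∧ l₂ = s ++ e₂ :: t₂ := by
  intro l₁
  induction l₁ with
  | nil => intro l₂; exact Or.inl (List.nil_prefix)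
  | cons a t ih =>
    intro l₂
    cases l₂ with
    | nil => exact Or.inr (Or.inl List.nil_prefix)
    | cons b t₂ =>
      by_cases hab : a = b
      · subst hab
        rcases ih t₂ with h | h | ⟨s, e₁, e₂, t₁', t₂', hne, h1, h2⟩
        · exact Or.inl (List.cons_prefix_cons.mpr ⟨rfl, h⟩)
        · exact Or.inr (Or.inl (List.cons_prefix_cons.mpr ⟨rfl, h⟩))
        · exact Or.inr (Or.inr ⟨a :: s, e₁, e₂, t₁', t₂', hne, by simp [h1], by simp [h2]⟩)
      · exact Or.inr (Or.inr ⟨[], a, b, t, t₂, hab, rfl, rfl⟩)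

/-- the key of a vertex: embedded chain plus a parity sentinel -/
def key (r : V) (p : V → V) (d : V → ℕ) (v : V) : List (E V) :=
  (ch r p d v).map emb ++ [if d v % 2 = 1 then (⊥ : E V) else ⊤]

section keylemmas
variable (hdr : d r = 0) (hd : ∀ v, v ≠ r → d v = d (p v) + 1)

include hdr hd

lemma key_inj {u w : V} (h : key r p d u = key r p d w) : u = w := by
  apply ch_inj hdr hd
  have hlen := congrArg List.length h
  simp only [key, List.length_append, List.length_map, List.length_cons,
    List.length_nil] at hlen
  have hll : ((ch r p d u).map emb).length = ((ch r p d w).map emb).length := by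
    simp only [List.length_map]; omega
  have h2 : (ch r p d u).map emb = (ch r p d w).map emb := by
    have := congrArg (List.take ((ch r p d u).map emb).length) h
    rwa [key, key, List.take_left' rfl, List.take_left' hll.symm] at this
  exact List.map_injective_iff.mpr (fun a b hab => emb_inj hab) h2

omit hdr hd in
lemma div_lt {x c : V} {s : List V} {e₁ e₂ : V} {t₁ t₂ : List V}
    (hx : ch r p d x = s ++ e₁ :: t₁) (hc : ch r p d c = s ++ e₂ :: t₂)
    (hne : e₁ ≠ e₂) : key r p d x < key r p d c ↔ e₂ < e₁ := by
  have hshape : ∀ (v : V) (t : List V), ch r p d v = s ++ e₁ :: t → ∃ j,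
      key r p d v = s.map emb ++ emb e₁ :: j := by
    intro v t hv
    exact ⟨t.map emb ++ [if d v % 2 = 1 then (⊥ : E V) else ⊤], by simp [key, hv]⟩
  obtain ⟨j₁, hj₁⟩ := hshape x t₁ hx
  have hshape2 : ∃ j, key r p d c = s.map emb ++ emb e₂ :: j :=
    ⟨t₂.map emb ++ [if d c % 2 = 1 then (⊥ : E V) else ⊤], by simp [key, hc]⟩
  obtain ⟨j₂, hj₂⟩ := hshape2
  rw [hj₁, hj₂]
  constructor
  · intro h
    rcases lt_trichotomy e₂ e₁ with h' | h' | h'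
    · exact h'
    · exact absurd h' (Ne.symm hne)
    · exact absurd (lex_mid (emb_lt_emb.mpr h')) (asymm h)
  · intro h
    exact lex_mid (emb_lt_emb.mpr h)

/-- prefix with one more element: concrete decomposition -/
lemma sub_decomp {x c : V} (h : ch r p d x <+: ch r p d c) (hne : c ≠ x) :
    ∃ u t, u ≠ r ∧ p u = x ∧ ch r p d c = ch r p d x ++ u :: t := by
  obtain ⟨u, hur, hpu, hpre⟩ := sub_step hdr hd h hne
  obtain ⟨t, ht⟩ := hpre
  exact ⟨u, t, hur, hpu, by rw [← ht]; simp⟩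

lemma anc_lt {x c : V} (h : ch r p d x <+: ch r p d c) (hne : c ≠ x)
    (hx : d x % 2 = 1) : key r p d x < key r p d c := by
  obtain ⟨u, t, hur, hpu, hc⟩ := sub_decomp hdr hd h hne
  have : key r p d c = (ch r p d x).map emb ++ emb u ::
      (t.map emb ++ [if d c % 2 = 1 then (⊥ : E V) else ⊤]) := by simp [key, hc]
  rw [this, key, if_pos hx]
  exact lex_mid (bot_lt_emb u)

lemma anc_gt {x c : V} (h : ch r p d x <+: ch r p d c) (hne : c ≠ x)
    (hx : d x % 2 = 0) : key r p d c < key r p d x := by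
  obtain ⟨u, t, hur, hpu, hc⟩ := sub_decomp hdr hd h hne
  have : key r p d c = (ch r p d x).map emb ++ emb u ::
      (t.map emb ++ [if d c % 2 = 1 then (⊥ : E V) else ⊤]) := by simp [key, hc]
  rw [this, key, if_neg (show ¬(d x % 2 = 1) by omega)]
  exact lex_mid (emb_lt_top u)

lemma ub_odd {x c : V} (h : ch r p d x <+: ch r p d c) (hx : d x % 2 = 0) :
    key r p d c ≤ key r p d x := by
  by_cases hc : c = x
  · rw [hc]
  · exact (anc_gt hdr hd h hc hx).le

lemma lb_even {x c : V} (h : ch r p d x <+: ch r p d c) (hx : d x % 2 = 1) :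
    key r p d x ≤ key r p d c := by
  by_cases hc : c = x
  · rw [hc]
  · exact (anc_lt hdr hd h hc hx).le

end keylemmas

section finpart
variable [Fintype V]
variable {r : V} {p : V → V} {d : V → ℕ}

lemma mem_child {u x : V} : u ∈ t2pChild r p x ↔ u ≠ r ∧ p u = x := by
  simp [t2pChild]

section withhyp
variable (hdr : d r = 0) (hd : ∀ v, v ≠ r → d v = d (p v) + 1)

local notation "K" => key r p d
local notation "C" => ch r p d

include hd in
lemma ch_child {u x : V} (hu : u ∈ t2pChild r p x) : C u = C x ++ [u] := by
  obtain ⟨hur, hpu⟩ := mem_child.mp hu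
  rw [ch_step hd hur, hpu]

include hd in
lemma d_child {u x : V} (hu : u ∈ t2pChild r p x) : d u = d x + 1 := by
  obtain ⟨hur, hpu⟩ := mem_child.mp hu
  rw [hd u hur, hpu]

include hdr hd in
/-- upper bound on the subtree of an even-labelled internal node: the min child is last -/
lemma ub_even {x c : V} (hx : d x % 2 = 1) (hch : (t2pChild r p x).Nonempty)
    (h : C x <+: C c) : K c ≤ K ((t2pChild r p x).min' hch) := by
  set m := (t2pChild r p x).min' hch with hm
  have hmmem := (t2pChild r p x).min'_mem hch
  have hchm : C m = C x ++ [m] := ch_child hd hmmem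
  have hdm : d m = d x + 1 := d_child hd hmmem
  by_cases hc : c = x
  · subst hc
    have : K m = (C c).map emb ++ emb m ::
        [if d m % 2 = 1 then (⊥ : E V) else ⊤] := by simp [key, hchm]
    rw [this, key, if_pos hx]
    exact (lex_mid (bot_lt_emb m)).le
  · obtain ⟨u, t, hur, hpu, hceq⟩ := sub_decomp hdr hd h hc
    have humem : u ∈ t2pChild r p x := mem_child.mpr ⟨hur, hpu⟩
    rcases eq_or_lt_of_le ((t2pChild r p x).min'_le u humem) with he | hlt
    · apply ub_odd hdr hd _ (by omega)
      rw [hchm, show m = u from he ▸ hm, hceq]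
      exact ⟨t, by simp⟩
    · refine ((div_lt (x := c) (c := m) (by rw [hceq]) (by rw [hchm])
        (by exact fun e => absurd e.symm hlt.ne)).mpr hlt).le

include hdr hd in
/-- lower bound on the subtree of an odd-labelled internal node: the max child is first -/
lemma lb_odd {x c : V} (hx : d x % 2 = 0) (hch : (t2pChild r p x).Nonempty)
    (h : C x <+: C c) : K ((t2pChild r p x).max' hch) ≤ K c := by
  set m := (t2pChild r p x).max' hch with hm
  have hmmem := (t2pChild r p x).max'_mem hch
  have hchm : C m = C x ++ [m] := ch_child hd hmmem
  have hdm : d m = d x + 1 := d_child hd hmmem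
  by_cases hc : c = x
  · subst hc
    have : K m = (C c).map emb ++ emb m ::
        [if d m % 2 = 1 then (⊥ : E V) else ⊤] := by simp [key, hchm]
    rw [this, key, if_neg (show ¬(d c % 2 = 1) by omega)]
    exact (lex_mid (emb_lt_top m)).le
  · obtain ⟨u, t, hur, hpu, hceq⟩ := sub_decomp hdr hd h hc
    have humem : u ∈ t2pChild r p x := mem_child.mpr ⟨hur, hpu⟩
    rcases eq_or_lt_of_le ((t2pChild r p x).le_max' u humem) with he | hlt
    · apply lb_even hdr hd _ (by omega)
      rw [hchm, show m = u from hm.trans he.symm, hceq]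
      exact ⟨t, by simp⟩
    · refine ((div_lt (x := m) (c := c) (by rw [hchm]) (by rw [hceq])
        hlt.ne').mpr hlt).le

include hdr hd in
/-- key successor property of each edge -/
lemma succ_main {v a b : V} (hv : v ≠ r)
    (hab : t2pEdge r p (fun w => 1 + d w) v = (a, b)) :
    a ≠ r ∧ K a < K b ∧ ∀ c, K a < K c → K b ≤ K c := by
  have hdv := hd v hv
  have hvmem : v ∈ t2pChild r p (p v) := mem_child.mpr ⟨hv, rfl⟩
  have hchv : C v = C (p v) ++ [v] := ch_step hd hv
  by_cases hpar : d v % 2 = 0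
  · -- odd label: a = min RSib / parent, b = max child / v
    rw [t2pEdge, if_pos (show (1 + d v) % 2 = 1 by omega)] at hab
    obtain ⟨ha, hb⟩ := Prod.mk.inj hab
    have hPr : p v ≠ r := by
      intro e; rw [e, hdr] at hdv; omega
    have hdP : d (p v) % 2 = 1 := by
      have := hd v hv
      have hP0 : d (p v) ≠ 0 := fun e => hPr (by
        by_contra hne
        have := hd (p v) hne
        omega)
      omega
    -- b facts
    have hbsub : C v <+: C b := by
      rw [← hb]
      by_cases h : (t2pChild r p v).Nonempty
      · rw [dif_pos h, ch_child hd ((t2pChild r p v).max'_mem h)]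
        exact ⟨_, rfl⟩
      · rw [dif_neg h]
    have hbmin : ∀ c, C v <+: C c → K b ≤ K c := by
      intro c hc
      rw [← hb]
      by_cases h : (t2pChild r p v).Nonempty
      · rw [dif_pos h]; exact lb_odd hdr hd hpar h hc
      · rw [dif_neg h]
        by_cases hcv : c = v
        · rw [hcv]
        · obtain ⟨u, t, hur, hpu, -⟩ := sub_decomp hdr hd hc hcv
          exact absurd ⟨u, mem_child.mpr ⟨hur, hpu⟩⟩ h
    obtain ⟨tb', hbdec⟩ := hbsub
    have hchb : C b = C (p v) ++ v :: tb' := by rw [← hbdec, hchv]; simp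
    by_cases hrs : (t2pRSib r p v).Nonempty
    · rw [dif_pos hrs] at ha
      subst ha
      have hw1mem := (t2pRSib r p v).min'_mem hrs
      simp only [t2pRSib, Finset.mem_filter] at hw1mem
      obtain ⟨hw1c, hvw1⟩ := hw1mem
      set w₁ := (t2pRSib r p v).min' hrs with hw1
      have hw1r : w₁ ≠ r := (mem_child.mp hw1c).1
      have hchw1 : C w₁ = C (p v) ++ [w₁] := ch_child hd hw1c
      have hdw1 : d w₁ = d (p v) + 1 := d_child hd hw1c
      refine ⟨hw1r, ?_, ?_⟩
      · exact (div_lt (s := C (p v)) (t₁ := ([] : List V)) hchw1 hchb hvw1.ne').mpr hvw1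
      · intro c hac
        by_cases hcP : c = p v
        · rw [hcP] at hac
          have hpre : C (p v) <+: C w₁ := ⟨[w₁], hchw1.symm⟩
          have hne : w₁ ≠ p v := fun e => by rw [e] at hdw1; omega
          exact absurd hac (asymm (anc_lt hdr hd hpre hne hdP))
        rcases list_trich (C (p v)) (C c) with hPc | hcP' | ⟨s, e₁, e₂, t₁, t₂, hne, h1, h2⟩
        · obtain ⟨u, t, hur, hpu, hceq⟩ := sub_decomp hdr hd hPc hcP
          have humem : u ∈ t2pChild r p (p v) := mem_child.mpr ⟨hur, hpu⟩
          rcases lt_trichotomy u v with h | h | h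
          · exact ((div_lt (s := C (p v)) hchb hceq h.ne').mpr h).le
          · subst h
            exact hbmin c (by rw [hceq, hchv]; exact ⟨t, by simp⟩)
          · have humem2 : u ∈ t2pRSib r p v := by
              simp only [t2pRSib, Finset.mem_filter]; exact ⟨humem, h⟩
            have hw1u : w₁ ≤ u := (t2pRSib r p v).min'_le u humem2
            rcases eq_or_lt_of_le hw1u with he | hlt
            · have hsub : C w₁ <+: C c := by
                rw [hchw1, he, hceq]; exact ⟨t, by simp⟩
              exact absurd (ub_odd hdr hd hsub (by omega)) (not_le.mpr hac)
            · have := (div_lt (s := C (p v)) (t₁ := ([] : List V)) hchw1 hceq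
                hlt.ne).mp hac
              exact absurd this (asymm hlt)
        · have hlenc : d c ≤ d (p v) := by
            have := hcP'.length_le
            rwa [ch_length hdr hd, ch_length hdr hd] at this
          by_cases hdc : d c % 2 = 1
          · have hca : C c <+: C w₁ := hcP'.trans ⟨[w₁], hchw1.symm⟩
            have hne : w₁ ≠ c := fun e => by rw [e] at hdw1; omega
            exact absurd hac (asymm (anc_lt hdr hd hca hne hdc))
          · have hcb : C c <+: C b := hcP'.trans ⟨v :: tb', hchb.symm⟩
            exact ub_odd hdr hd hcb (by omega)
        · have hchaa : C w₁ = s ++ e₁ :: (t₁ ++ [w₁]) := by rw [hchw1, h1]; simp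
          have hchbb : C b = s ++ e₁ :: (t₁ ++ v :: tb') := by rw [hchb, h1]; simp
          have he21 := (div_lt hchaa h2 hne).mp hac
          exact ((div_lt hchbb h2 hne).mpr he21).le
    · rw [dif_neg hrs] at ha
      subst ha
      have hvmax : ∀ u ∈ t2pChild r p (p v), u ≤ v := by
        intro u hu
        by_contra hlt
        exact hrs ⟨u, by simp only [t2pRSib, Finset.mem_filter]; exact ⟨hu, not_le.mp hlt⟩⟩
      refine ⟨hPr, ?_, ?_⟩
      · have hKP : K (p v) = (C (p v)).map emb ++ [(⊥ : E V)] := by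
          rw [key, if_pos hdP]
        have hKb : K b = (C (p v)).map emb ++ emb v ::
            (tb'.map emb ++ [if d b % 2 = 1 then (⊥ : E V) else ⊤]) := by
          simp [key, hchb]
        rw [hKP, hKb]
        exact lex_mid (bot_lt_emb v)
      · intro c hac
        by_cases hcP : c = p v
        · rw [hcP] at hac
          exact absurd hac (lt_irrefl _)
        rcases list_trich (C (p v)) (C c) with hPc | hcP' | ⟨s, e₁, e₂, t₁, t₂, hne, h1, h2⟩
        · obtain ⟨u, t, hur, hpu, hceq⟩ := sub_decomp hdr hd hPc hcP
          have humem : u ∈ t2pChild r p (p v) := mem_child.mpr ⟨hur, hpu⟩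
          rcases eq_or_lt_of_le (hvmax u humem) with he | hlt
          · subst he
            exact hbmin c (by rw [hceq, hchv]; exact ⟨t, by simp⟩)
          · exact ((div_lt (s := C (p v)) hchb hceq hlt.ne').mpr hlt).le
        · have hlenc : d c ≤ d (p v) := by
            have := hcP'.length_le
            rwa [ch_length hdr hd, ch_length hdr hd] at this
          by_cases hdc : d c % 2 = 1
          · have hca : C c <+: C (p v) := hcP'
            have hne : p v ≠ c := fun e => by
              rw [← e] at hac; exact absurd hac (lt_irrefl _)
            exact absurd hac (asymm (anc_lt hdr hd hca hne hdc))
          · have hcb : C c <+: C b := hcP'.trans ⟨v :: tb', hchb.symm⟩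
            exact ub_odd hdr hd hcb (by omega)
        · have hchbb : C b = s ++ e₁ :: (t₁ ++ v :: tb') := by rw [hchb, h1]; simp
          have he21 := (div_lt h1 h2 hne).mp hac
          exact ((div_lt hchbb h2 hne).mpr he21).le
  · -- even label: a = min child / v, b = max LSib / parent
    rw [t2pEdge, if_neg (show ¬((1 + d v) % 2 = 1) by omega)] at hab
    obtain ⟨ha, hb⟩ := Prod.mk.inj hab
    have hdP : d (p v) % 2 = 0 := by omega
    -- a facts
    have hasub : C v <+: C a := by
      rw [← ha]
      by_cases h : (t2pChild r p v).Nonempty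
      · rw [dif_pos h, ch_child hd ((t2pChild r p v).min'_mem h)]
        exact ⟨_, rfl⟩
      · rw [dif_neg h]
    have hamax : ∀ c, C v <+: C c → K c ≤ K a := by
      intro c hc
      rw [← ha]
      by_cases h : (t2pChild r p v).Nonempty
      · rw [dif_pos h]; exact ub_even hdr hd (by omega) h hc
      · rw [dif_neg h]
        by_cases hcv : c = v
        · rw [hcv]
        · obtain ⟨u, t, hur, hpu, -⟩ := sub_decomp hdr hd hc hcv
          exact absurd ⟨u, mem_child.mpr ⟨hur, hpu⟩⟩ h
    have har : a ≠ r := by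
      rw [← ha]
      by_cases h : (t2pChild r p v).Nonempty
      · rw [dif_pos h]
        exact (mem_child.mp ((t2pChild r p v).min'_mem h)).1
      · rw [dif_neg h]; exact hv
    obtain ⟨ta', hadec⟩ := hasub
    have hcha : C a = C (p v) ++ v :: ta' := by rw [← hadec, hchv]; simp
    by_cases hls : (t2pLSib r p v).Nonempty
    · rw [dif_pos hls] at hb
      subst hb
      have hw2mem := (t2pLSib r p v).max'_mem hls
      simp only [t2pLSib, Finset.mem_filter] at hw2mem
      obtain ⟨hw2c, hw2v⟩ := hw2mem
      set w₂ := (t2pLSib r p v).max' hls with hw2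
      have hchw2 : C w₂ = C (p v) ++ [w₂] := ch_child hd hw2c
      have hdw2 : d w₂ = d (p v) + 1 := d_child hd hw2c
      refine ⟨har, ?_, ?_⟩
      · exact (div_lt (s := C (p v)) (t₂ := ([] : List V)) hcha hchw2 hw2v.ne').mpr hw2v
      · intro c hac
        by_cases hcP : c = p v
        · rw [hcP]
          have hKP : K (p v) = (C (p v)).map emb ++ [(⊤ : E V)] := by
            rw [key, if_neg (by omega)]
          have hKw : K w₂ = (C (p v)).map emb ++ emb w₂ ::
              [if d w₂ % 2 = 1 then (⊥ : E V) else ⊤] := by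
            simp [key, hchw2]
          rw [hKP, hKw]
          exact (lex_mid (emb_lt_top w₂)).le
        rcases list_trich (C (p v)) (C c) with hPc | hcP' | ⟨s, e₁, e₂, t₁, t₂, hne, h1, h2⟩
        · obtain ⟨u, t, hur, hpu, hceq⟩ := sub_decomp hdr hd hPc hcP
          have humem : u ∈ t2pChild r p (p v) := mem_child.mpr ⟨hur, hpu⟩
          rcases lt_trichotomy u v with h | h | h
          · have humem2 : u ∈ t2pLSib r p v := by
              simp only [t2pLSib, Finset.mem_filter]; exact ⟨humem, h⟩
            have huw2 : u ≤ w₂ := (t2pLSib r p v).le_max' u humem2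
            rcases eq_or_lt_of_le huw2 with he | hlt
            · have hsub : C w₂ <+: C c := by
                rw [hchw2, ← he, hceq]; exact ⟨t, by simp⟩
              exact lb_even hdr hd hsub (by omega)
            · exact ((div_lt (s := C (p v)) (t₁ := ([] : List V)) hchw2 hceq
                hlt.ne').mpr hlt).le
          · have hsub : C v <+: C c := by
              rw [hceq, hchv, h]; exact ⟨t, by simp⟩
            exact absurd hac (not_lt.mpr (hamax c hsub))
          · have := (div_lt (s := C (p v)) hcha hceq h.ne).mp hac
            exact absurd this (asymm h)
        · have hlenc : d c ≤ d (p v) := by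
            have := hcP'.length_le
            rwa [ch_length hdr hd, ch_length hdr hd] at this
          by_cases hdc : d c % 2 = 1
          · have hca : C c <+: C a := hcP'.trans ⟨v :: ta', hcha.symm⟩
            have hda : d (p v) < d a := by
              have hl := congrArg List.length hcha
              rw [ch_length hdr hd, List.length_append, List.length_cons,
                ch_length hdr hd] at hl
              omega
            have hne2 : a ≠ c := fun e => by rw [e] at hda; omega
            exact absurd hac (asymm (anc_lt hdr hd hca hne2 hdc))
          · have hcw : C c <+: C w₂ := hcP'.trans ⟨[w₂], hchw2.symm⟩
            exact ub_odd hdr hd hcw (by omega)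
        · have hchaa : C a = s ++ e₁ :: (t₁ ++ v :: ta') := by rw [hcha, h1]; simp
          have hchbb : C w₂ = s ++ e₁ :: (t₁ ++ [w₂]) := by rw [hchw2, h1]; simp
          have he21 := (div_lt hchaa h2 hne).mp hac
          exact ((div_lt hchbb h2 hne).mpr he21).le
    · rw [dif_neg hls] at hb
      subst hb
      have hvmin : ∀ u ∈ t2pChild r p (p v), v ≤ u := by
        intro u hu
        by_contra hlt
        exact hls ⟨u, by simp only [t2pLSib, Finset.mem_filter]; exact ⟨hu, not_le.mp hlt⟩⟩
      refine ⟨har, ?_, ?_⟩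
      · have hKP : K (p v) = (C (p v)).map emb ++ [(⊤ : E V)] := by
          rw [key, if_neg (by omega)]
        have hKa : K a = (C (p v)).map emb ++ emb v ::
            (ta'.map emb ++ [if d a % 2 = 1 then (⊥ : E V) else ⊤]) := by
          simp [key, hcha]
        rw [hKP, hKa]
        exact lex_mid (emb_lt_top v)
      · intro c hac
        by_cases hcP : c = p v
        · rw [hcP]
        rcases list_trich (C (p v)) (C c) with hPc | hcP' | ⟨s, e₁, e₂, t₁, t₂, hne, h1, h2⟩
        · obtain ⟨u, t, hur, hpu, hceq⟩ := sub_decomp hdr hd hPc hcP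
          have humem : u ∈ t2pChild r p (p v) := mem_child.mpr ⟨hur, hpu⟩
          rcases eq_or_lt_of_le (hvmin u humem) with he | hlt
          · have hsub : C v <+: C c := by
              rw [hceq, hchv, ← he]; exact ⟨t, by simp⟩
            exact absurd hac (not_lt.mpr (hamax c hsub))
          · have := (div_lt (s := C (p v)) hcha hceq hlt.ne).mp hac
            exact absurd this (asymm hlt)
        · by_cases hdc : d c % 2 = 1
          · have hca : C c <+: C a := hcP'.trans ⟨v :: ta', hcha.symm⟩
            have hlenc : d c ≤ d (p v) := by
              have := hcP'.length_le
              rwa [ch_length hdr hd, ch_length hdr hd] at this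
            have hda : d (p v) < d a := by
              have hl := congrArg List.length hcha
              rw [ch_length hdr hd, List.length_append, List.length_cons,
                ch_length hdr hd] at hl
              omega
            have hne2 : a ≠ c := fun e => by rw [e] at hda; omega
            exact absurd hac (asymm (anc_lt hdr hd hca hne2 hdc))
          · exact ub_odd hdr hd hcP' (by omega)
        · have hchaa : C a = s ++ e₁ :: (t₁ ++ v :: ta') := by rw [hcha, h1]; simp
          have he21 := (div_lt hchaa h2 hne).mp hac
          exact ((div_lt h1 h2 hne).mpr he21).le

include hdr hd in
lemma cover {a : V} (ha : a ≠ r) :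
    ∃ v, v ≠ r ∧ (t2pEdge r p (fun w => 1 + d w) v).1 = a := by
  by_cases hp : d a % 2 = 1
  · by_cases h : (t2pChild r p a).Nonempty
    · have hMmem := (t2pChild r p a).max'_mem h
      obtain ⟨hMr, hpM⟩ := mem_child.mp hMmem
      have hdM : d ((t2pChild r p a).max' h) = d a + 1 := d_child hd hMmem
      refine ⟨(t2pChild r p a).max' h, hMr, ?_⟩
      rw [t2pEdge, if_pos (show (1 + d ((t2pChild r p a).max' h)) % 2 = 1 by omega)]
      have hrs : ¬(t2pRSib r p ((t2pChild r p a).max' h)).Nonempty := by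
        rintro ⟨w, hw⟩
        simp only [t2pRSib, Finset.mem_filter, hpM] at hw
        exact absurd ((t2pChild r p a).le_max' w hw.1) (not_le.mpr hw.2)
      dsimp only
      rw [dif_neg hrs]
      exact hpM
    · refine ⟨a, ha, ?_⟩
      rw [t2pEdge, if_neg (show ¬((1 + d a) % 2 = 1) by omega)]
      dsimp only
      rw [dif_neg h]
  · have hda := hd a ha
    have hPr : p a ≠ r := by
      intro e
      rw [e, hdr] at hda
      omega
    have hamem : a ∈ t2pChild r p (p a) := mem_child.mpr ⟨ha, rfl⟩
    by_cases h : (t2pLSib r p a).Nonempty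
    · obtain ⟨w, hwc, hwa, hwmax⟩ : ∃ w, w ∈ t2pChild r p (p a) ∧ w < a ∧
          ∀ u ∈ t2pChild r p (p a), u < a → u ≤ w := by
        refine ⟨(t2pLSib r p a).max' h, ?_, ?_, ?_⟩
        · have := (t2pLSib r p a).max'_mem h
          simp only [t2pLSib, Finset.mem_filter] at this
          exact this.1
        · have := (t2pLSib r p a).max'_mem h
          simp only [t2pLSib, Finset.mem_filter] at this
          exact this.2
        · intro u hu hua
          exact Finset.le_max' _ u (by simp only [t2pLSib, Finset.mem_filter]; exact ⟨hu, hua⟩)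
      obtain ⟨hwr, hpw⟩ := mem_child.mp hwc
      have hdw : d w = d (p a) + 1 := d_child hd hwc
      refine ⟨w, hwr, ?_⟩
      rw [t2pEdge, if_pos (show (1 + d w) % 2 = 1 by omega)]
      have hamem2 : a ∈ t2pRSib r p w := by
        simp only [t2pRSib, Finset.mem_filter]
        exact ⟨by rw [hpw]; exact hamem, hwa⟩
      have hrs : (t2pRSib r p w).Nonempty := ⟨a, hamem2⟩
      dsimp only
      rw [dif_pos hrs]
      have hle := (t2pRSib r p w).min'_le a hamem2
      have hmem2 := (t2pRSib r p w).min'_mem hrs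
      simp only [t2pRSib, Finset.mem_filter] at hmem2
      obtain ⟨hm2c, hm2w⟩ := hmem2
      obtain ⟨hm2r, hm2p⟩ := mem_child.mp hm2c
      rcases eq_or_lt_of_le hle with he | hlt
      · exact he
      · exact absurd (hwmax _ (mem_child.mpr ⟨hm2r, by rw [hm2p, hpw]⟩) hlt)
          (not_le.mpr hm2w)
    · refine ⟨p a, hPr, ?_⟩
      rw [t2pEdge, if_neg (show ¬((1 + d (p a)) % 2 = 1) by omega)]
      dsimp only
      have hch : (t2pChild r p (p a)).Nonempty := ⟨a, hamem⟩
      rw [dif_pos hch]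
      have hle := (t2pChild r p (p a)).min'_le a hamem
      rcases eq_or_lt_of_le hle with he | hlt
      · exact he
      · exfalso
        refine h ⟨(t2pChild r p (p a)).min' hch, ?_⟩
        simp only [t2pLSib, Finset.mem_filter]
        exact ⟨(t2pChild r p (p a)).min'_mem hch, hlt⟩

include hdr hd in
lemma key_lt_root {c : V} (hc : c ≠ r) : K c < K r := by
  apply anc_gt hdr hd _ hc (by rw [hdr])
  rw [ch_root hdr]
  exact List.nil_prefix

include hdr hd in
lemma key_min (hch : (t2pChild r p r).Nonempty) :
    ∀ c, c ≠ (t2pChild r p r).max' hch → K ((t2pChild r p r).max' hch) < K c := by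
  intro c hc
  have hMmem := (t2pChild r p r).max'_mem hch
  have hchM : C ((t2pChild r p r).max' hch) = [(t2pChild r p r).max' hch] := by
    rw [ch_child hd hMmem, ch_root hdr]
    rfl
  have hdM : d ((t2pChild r p r).max' hch) = 1 := by
    rw [d_child hd hMmem, hdr]
  by_cases hcr : c = r
  · rw [hcr]
    exact key_lt_root hdr hd (mem_child.mp hMmem).1
  · have hsub : C r <+: C c := by rw [ch_root hdr]; exact List.nil_prefix
    obtain ⟨u, t, hur, hpu, hceq⟩ := sub_decomp hdr hd hsub hcr
    rw [ch_root hdr] at hceq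
    have humem : u ∈ t2pChild r p r := mem_child.mpr ⟨hur, hpu⟩
    rcases eq_or_lt_of_le ((t2pChild r p r).le_max' u humem) with he | hlt
    · have hsub2 : C ((t2pChild r p r).max' hch) <+: C c := by
        rw [hchM, hceq, he]
        exact ⟨t, by simp⟩
      exact anc_lt hdr hd hsub2 hc (by omega)
    · exact (div_lt (s := ([] : List V)) (t₁ := ([] : List V)) (t₂ := t)
        (by simp [hchM]) (by simp [hceq]) hlt.ne').mpr hlt

include hdr hd in
lemma child_root_nonempty (h2 : 2 ≤ Fintype.card V) : (t2pChild r p r).Nonempty := by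
  obtain ⟨v, hv⟩ := Fintype.exists_ne_of_one_lt_card (by omega) r
  have H : ∀ n w, d w = n → w ≠ r → (t2pChild r p r).Nonempty := by
    intro n
    induction n using Nat.strong_induction_on with
    | _ n ih =>
      intro w hn hw
      by_cases hpw : p w = r
      · exact ⟨w, mem_child.mpr ⟨hw, hpw⟩⟩
      · exact ih (d (p w)) (by have := hd w hw; omega) (p w) rfl hpw
  exact H (d v) v rfl hv

end withhyp
end finpart

end T2Paux

open T2Paux

/-- **Tree-to-Path, root label 1.** With labels `l v = (1 + d v) % 2`, so `l r = 1`,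
the Tree-to-Path algorithm outputs a directed Hamiltonian path beginning at the maximum
child of `r` and ending at `r`. -/
theorem tree_to_path_root_label_one [Fintype V] [LinearOrder V]
    (r : V) (p : V → V) (d : V → ℕ)
    (hcard : 2 ≤ Fintype.card V)
    (hdr : d r = 0)
    (hd : ∀ v, v ≠ r → d v = d (p v) + 1) :
    ∃ f : Fin (Fintype.card V) ≃ V,
      IsGreatest (↑(t2pChild r p r) : Set V) (f ⟨0, by omega⟩) ∧
      f ⟨Fintype.card V - 1, by omega⟩ = r ∧
      ∀ a b : V,
        ((a, b) ∈ (Finset.univ.filter (fun v => v ≠ r)).image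
            (t2pEdge r p (fun v => 1 + d v))) ↔
          ∃ i : ℕ, ∃ h : i + 1 < Fintype.card V,
            a = f ⟨i, by omega⟩ ∧ b = f ⟨i + 1, h⟩ := by
  classical
  let le' : V → V → Prop := fun u w => key r p d u ≤ key r p d w
  letI : DecidableRel le' := fun a b => Classical.propDecidable _
  haveI : IsTrans V le' := ⟨fun a b c h1 h2 => le_trans h1 h2⟩
  haveI : IsAntisymm V le' := ⟨fun a b h1 h2 => key_inj hdr hd (le_antisymm h1 h2)⟩
  haveI : IsTotal V le' := ⟨fun a b => le_total _ _⟩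
  set L := Finset.univ.sort le' with hL
  have hsorted : L.Pairwise le' := Finset.pairwise_sort _ _
  have hnodup : L.Nodup := Finset.sort_nodup _ _
  have hmem : ∀ v : V, v ∈ L := fun v => (Finset.mem_sort le').mpr (Finset.mem_univ v)
  have hlen : L.length = Fintype.card V := by
    rw [hL, Finset.length_sort, Finset.card_univ]
  have hidx : ∀ v : V, ∃ i : Fin L.length, L.get i = v :=
    fun v => List.mem_iff_get.mp (hmem v)
  have hstrict : ∀ (i j : Fin L.length), i < j →
      key r p d (L.get i) < key r p d (L.get j) := by
    intro i j hij
    have hle : le' (L.get i) (L.get j) := List.Pairwise.rel_get_of_lt hsorted hij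
    refine lt_of_le_of_ne hle (fun e => ?_)
    exact hij.ne (hnodup.get_inj_iff.mp (key_inj hdr hd e))
  have hlt_idx : ∀ (i j : Fin L.length),
      key r p d (L.get i) < key r p d (L.get j) → i < j := by
    intro i j h
    rcases lt_trichotomy i j with h' | h' | h'
    · exact h'
    · rw [h'] at h; exact absurd h (lt_irrefl _)
    · exact absurd (hstrict j i h') (asymm h)
  -- the equivalence
  have hbij : Function.Bijective (fun i : Fin (Fintype.card V) =>
      L.get (Fin.cast hlen.symm i)) := by
    constructor
    · intro i j hij
      have := hnodup.get_inj_iff.mp hij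
      have hv : (Fin.cast hlen.symm i).val = (Fin.cast hlen.symm j).val := by rw [this]
      exact Fin.ext hv
    · intro v
      obtain ⟨i, hi⟩ := hidx v
      refine ⟨⟨i.val, by rw [← hlen]; exact i.2⟩, ?_⟩
      simp only []
      rw [show Fin.cast hlen.symm ⟨i.val, by rw [← hlen]; exact i.2⟩ = i from Fin.ext rfl]
      exact hi
  refine ⟨Equiv.ofBijective _ hbij, ?_, ?_, ?_⟩
  · -- IsGreatest : f 0 is the max child of the root
    have hch := child_root_nonempty hdr hd hcard
    have h0 : (0 : ℕ) < L.length := by omega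
    have hf0 : L.get ⟨0, h0⟩ = (t2pChild r p r).max' hch := by
      obtain ⟨iM, hiM⟩ := hidx ((t2pChild r p r).max' hch)
      by_cases h0M : (⟨0, h0⟩ : Fin L.length) = iM
      · rw [h0M, hiM]
      · have hlt : (⟨0, h0⟩ : Fin L.length) < iM := by
          rw [Fin.lt_def]
          exact Nat.pos_of_ne_zero (fun e => h0M (Fin.ext e.symm))
        have h1 := hstrict _ _ hlt
        rw [hiM] at h1
        have h2 := key_min hdr hd hch (L.get ⟨0, h0⟩) (fun e => h0M (by
          rw [← hiM] at e
          exact hnodup.get_inj_iff.mp e))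
        exact absurd h2 (asymm h1)
    have : (Equiv.ofBijective _ hbij) ⟨0, by omega⟩ = (t2pChild r p r).max' hch := by
      show L.get _ = _
      rw [show Fin.cast hlen.symm ⟨0, by omega⟩ = ⟨0, h0⟩ from Fin.ext rfl]
      exact hf0
    rw [this]
    exact ⟨Finset.mem_coe.mpr ((t2pChild r p r).max'_mem hch),
      fun x hx => (t2pChild r p r).le_max' x (Finset.mem_coe.mp hx)⟩
  · -- f (n-1) = r
    have hn1 : Fintype.card V - 1 < L.length := by omega
    have hfl : L.get ⟨Fintype.card V - 1, hn1⟩ = r := by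
      obtain ⟨ir, hir⟩ := hidx r
      by_cases hlast : ir = ⟨Fintype.card V - 1, hn1⟩
      · rw [← hlast, hir]
      · have hlt : ir < (⟨Fintype.card V - 1, hn1⟩ : Fin L.length) := by
          rcases Nat.lt_or_ge ir.val (Fintype.card V - 1) with h | h
          · exact Fin.lt_def.mpr h
          · exfalso
            have h2 := ir.2
            exact hlast (Fin.ext (by omega : ir.val = Fintype.card V - 1))
        have h1 := hstrict _ _ hlt
        rw [hir] at h1
        have h2 := key_lt_root hdr hd (c := L.get ⟨Fintype.card V - 1, hn1⟩)
          (fun e => hlast (hnodup.get_inj_iff.mp (by rw [e, hir])))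
        exact absurd h2 (asymm h1)
    show L.get _ = r
    rw [show Fin.cast hlen.symm ⟨Fintype.card V - 1, by omega⟩ =
      ⟨Fintype.card V - 1, hn1⟩ from Fin.ext rfl]
    exact hfl
  · -- the edge set is exactly the consecutive pairs
    intro a b
    have hgetf : ∀ (i : Fin L.length) (hj : i.val < Fintype.card V),
        (Equiv.ofBijective _ hbij) ⟨i.val, hj⟩ = L.get i := by
      intro i hj
      show L.get _ = L.get i
      have he : Fin.cast hlen.symm ⟨i.val, hj⟩ = i := Fin.ext rfl
      rw [he]
    constructor
    · intro hmem'
      rw [Finset.mem_image] at hmem'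
      obtain ⟨v, hv, hedge⟩ := hmem'
      rw [Finset.mem_filter] at hv
      obtain ⟨har, hKab, hKmin⟩ := succ_main hdr hd hv.2 hedge
      obtain ⟨ia, hia⟩ := hidx a
      obtain ⟨ib, hib⟩ := hidx b
      have hialt : ia < ib := hlt_idx ia ib (by rw [hia, hib]; exact hKab)
      have hsucc : ib.val = ia.val + 1 := by
        by_contra hne
        have h2 : ia.val + 1 < ib.val := by
          have := Fin.lt_def.mp hialt
          omega
        have him : ia.val + 1 < L.length := lt_trans h2 ib.2
        have hKm1 : key r p d a < key r p d (L.get ⟨ia.val + 1, him⟩) := by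
          rw [← hia]
          exact hstrict ia ⟨ia.val + 1, him⟩ (by simp [Fin.lt_def])
        have hKm2 := hKmin _ hKm1
        have hKm3 : key r p d (L.get ⟨ia.val + 1, him⟩) < key r p d b := by
          rw [← hib]
          exact hstrict ⟨ia.val + 1, him⟩ ib (by simpa [Fin.lt_def] using h2)
        exact absurd (lt_of_le_of_lt hKm2 hKm3) (lt_irrefl _)
      refine ⟨ia.val, by rw [← hsucc, ← hlen]; exact ib.2, ?_, ?_⟩
      · rw [hgetf ia (by rw [← hlen]; exact ia.2), hia]
      · have : (⟨ia.val + 1, by rw [← hsucc, ← hlen]; exact ib.2⟩ :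
            Fin (Fintype.card V)).val = ib.val := hsucc.symm
        rw [show (⟨ia.val + 1, by rw [← hsucc, ← hlen]; exact ib.2⟩ :
          Fin (Fintype.card V)) = ⟨ib.val, by rw [← hlen]; exact ib.2⟩ from Fin.ext this]
        rw [hgetf ib (by rw [← hlen]; exact ib.2), hib]
    · rintro ⟨i, hi1, hai, hbi⟩
      have hiL : i < L.length := by omega
      have hi1L : i + 1 < L.length := by omega
      have hai' : a = L.get ⟨i, hiL⟩ := by
        rw [hai, hgetf ⟨i, hiL⟩ (by omega)]
      have hbi' : b = L.get ⟨i + 1, hi1L⟩ := by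
        rw [hbi, hgetf ⟨i + 1, hi1L⟩ (by omega)]
      have hKab : key r p d a < key r p d b := by
        rw [hai', hbi']
        exact hstrict _ _ (by simp [Fin.lt_def])
      have har : a ≠ r := by
        intro e
        have hbr : b ≠ r := by
          intro e2
          rw [hai'] at e
          rw [hbi'] at e2
          have h5 := hnodup.get_inj_iff.mp (e.trans e2.symm)
          rw [Fin.mk.injEq] at h5
          omega
        have h6 := key_lt_root hdr hd hbr
        have h7 : key r p d b < key r p d a := by rw [e]; exact h6
        exact absurd hKab (asymm h7)
      obtain ⟨v, hvr, hfst⟩ := cover hdr hd har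
      have hab : t2pEdge r p (fun w => 1 + d w) v =
          (a, (t2pEdge r p (fun w => 1 + d w) v).2) := by
        rw [← hfst]
      obtain ⟨-, hKab2, hKmin⟩ := succ_main hdr hd hvr hab
      have hb2 : (t2pEdge r p (fun w => 1 + d w) v).2 = b := by
        obtain ⟨ib2, hib2⟩ := hidx (t2pEdge r p (fun w => 1 + d w) v).2
        have h1 : (⟨i, hiL⟩ : Fin L.length) < ib2 := by
          apply hlt_idx
          rw [hib2, ← hai']
          exact hKab2
        have h2 : key r p d (t2pEdge r p (fun w => 1 + d w) v).2 ≤ key r p d b :=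
          hKmin b hKab
        have h3 : key r p d b ≤ key r p d (t2pEdge r p (fun w => 1 + d w) v).2 := by
          rcases eq_or_lt_of_le (show i + 1 ≤ ib2.val from Fin.lt_def.mp h1) with he | hlt
          · rw [hbi', ← hib2]
            have : (⟨i + 1, hi1L⟩ : Fin L.length) = ib2 := Fin.ext he
            rw [this]
          · have := hstrict ⟨i + 1, hi1L⟩ ib2 (by rw [Fin.lt_def]; exact hlt)
            rw [hib2, ← hbi'] at this
            exact this.le
        exact key_inj hdr hd (le_antisymm h2 h3)
      rw [Finset.mem_image]
      exact ⟨v, Finset.mem_filter.mpr ⟨Finset.mem_univ v, hvr⟩, by rw [hab, hb2]⟩
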